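/- Let n ≥ 1, m ∈ ℕ, and let (p_k, q_k) ∈ {1,…,n}² for k = 1,…,m be clause pairs such that every element of {1,…,n} occurs as p_k or q_k for some k. Consider the boolean dynamical system on the vertex set {0, 1,…,n, n+1} with f_i(x) = x(i) for 0 ≤ i ≤ n, and f_{n+1}(x) defined by cases on (x(0), x(n+1)): it equals ⋀_{k=1}^m (x(p_k) ∧ x(q_k)) if (x(0), x(n+1)) = (false, false); ⋀_{k=1}^m (x(p_k) ∨ x(q_k)) if (false, true); ⋁_{k=1}^m (x(p_k) ∧ x(q_k)) if (true, false); and ⋁_{k=1}^m (x(p_k) ∨ x(q_k)) if (true, true). The number of fixed points of this system equals 2·#sat + 2^{n+1} − 2, where #sat is the number of assignments y : {1,…,n} → Bool with y(p_k) ∨ y(q_k) = true for all k. -/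
import Mathlib


/-- The boolean dynamical system of the `D₂`-reduction on the vertex set
`{0} ⊕ {1,…,n} ⊕ {n+1}`: vertex `0` (`Sum.inl ()`) and the variable vertices
(`Sum.inr (Sum.inl i)`) carry the identity, and vertex `n+1` (`Sum.inr (Sum.inr ())`)
carries the function defined by cases on `(x 0, x (n+1))`:
`⋀_k (x p_k ∧ x q_k)` on `(false, false)`, `⋀_k (x p_k ∨ x q_k)` on `(false, true)`,
`⋁_k (x p_k ∧ x q_k)` on `(true, false)`, and `⋁_k (x p_k ∨ x q_k)` on `(true, true)`. -/
noncomputable def sys18 (n m : ℕ) (p q : Fin m → Fin n) (v : Unit ⊕ Fin n ⊕ Unit)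
    (x : Unit ⊕ Fin n ⊕ Unit → Bool) : Bool :=
  match v with
  | Sum.inl _ => x (Sum.inl ())
  | Sum.inr (Sum.inl i) => x (Sum.inr (Sum.inl i))
  | Sum.inr (Sum.inr _) =>
      let y : Fin n → Bool := fun i => x (Sum.inr (Sum.inl i))
      match x (Sum.inl ()), x (Sum.inr (Sum.inr ())) with
      | false, false => Finset.univ.inf fun k : Fin m => y (p k) && y (q k)
      | false, true  => Finset.univ.inf fun k : Fin m => y (p k) || y (q k)
      | true,  false => Finset.univ.sup fun k : Fin m => y (p k) && y (q k)
      | true,  true  => Finset.univ.sup fun k : Fin m => y (p k) || y (q k)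

def C18 {n m : ℕ} (p q : Fin m → Fin n) (a b : Bool) (y : Fin n → Bool) : Prop :=
  (match a, b with
   | false, false => Finset.univ.inf fun k : Fin m => y (p k) && y (q k)
   | false, true  => Finset.univ.inf fun k : Fin m => y (p k) || y (q k)
   | true,  false => Finset.univ.sup fun k : Fin m => y (p k) && y (q k)
   | true,  true  => Finset.univ.sup fun k : Fin m => y (p k) || y (q k)) = b

noncomputable instance {n m : ℕ} (p q : Fin m → Fin n) (a b : Bool) :
    DecidablePred (C18 p q a b) := fun y => instDecidableEqBool _ _

lemma fix_iff18 {n m : ℕ} (p q : Fin m → Fin n) (x : Unit ⊕ Fin n ⊕ Unit → Bool) :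
    (∀ v, sys18 n m p q v x = x v) ↔
    C18 p q (x (Sum.inl ())) (x (Sum.inr (Sum.inr ())))
      (fun i => x (Sum.inr (Sum.inl i))) := by
  constructor
  · intro h
    exact h (Sum.inr (Sum.inr ()))
  · intro h v
    match v with
    | Sum.inl _ => rfl
    | Sum.inr (Sum.inl i) => rfl
    | Sum.inr (Sum.inr _) => exact h

def E18 {n m : ℕ} (p q : Fin m → Fin n) :
    {x : Unit ⊕ Fin n ⊕ Unit → Bool // ∀ v, sys18 n m p q v x = x v} ≃
      Σ ab : Bool × Bool, {y : Fin n → Bool // C18 p q ab.1 ab.2 y} where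
  toFun x := ⟨(x.1 (Sum.inl ()), x.1 (Sum.inr (Sum.inr ()))),
    fun i => x.1 (Sum.inr (Sum.inl i)), (fix_iff18 p q x.1).mp x.2⟩
  invFun t := ⟨fun v => match v with
    | Sum.inl _ => t.1.1
    | Sum.inr (Sum.inl i) => t.2.1 i
    | Sum.inr (Sum.inr _) => t.1.2,
    (fix_iff18 p q _).mpr t.2.2⟩
  left_inv x := by
    apply Subtype.ext
    funext v
    match v with
    | Sum.inl () => rfl
    | Sum.inr (Sum.inl i) => rfl
    | Sum.inr (Sum.inr ()) => rfl
  right_inv t := rfl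


lemma bool_inf_eq_true {β : Type*} (s : Finset β) (f : β → Bool) :
    s.inf f = true ↔ ∀ k ∈ s, f k = true := by
  rw [show (true : Bool) = ⊤ from rfl, Finset.inf_eq_top_iff]

lemma bool_sup_eq_false {β : Type*} (s : Finset β) (f : β → Bool) :
    s.sup f = false ↔ ∀ k ∈ s, f k = false := by
  rw [show (false : Bool) = ⊥ from rfl, Finset.sup_eq_bot_iff]

lemma bool_tfnf (b : Bool) : b = true ↔ ¬ b = false := by cases b <;> simp

lemma bool_fnt (b : Bool) : b = false ↔ ¬ b = true := by cases b <;> simp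

lemma inf_and_iff18 {n m : ℕ} (p q : Fin m → Fin n)
    (hocc : ∀ i : Fin n, ∃ k : Fin m, p k = i ∨ q k = i) (y : Fin n → Bool) :
    ((Finset.univ.inf fun k : Fin m => y (p k) && y (q k)) = true) ↔
      y = fun _ => true := by
  rw [bool_inf_eq_true]
  constructor
  · intro h
    funext i
    obtain ⟨k, hk⟩ := hocc i
    have := h k (Finset.mem_univ k)
    rw [Bool.and_eq_true] at this
    rcases hk with hk | hk <;> rw [← hk] <;> tauto
  · rintro rfl k _
    rfl

lemma sup_or_iff18 {n m : ℕ} (p q : Fin m → Fin n)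
    (hocc : ∀ i : Fin n, ∃ k : Fin m, p k = i ∨ q k = i) (y : Fin n → Bool) :
    ((Finset.univ.sup fun k : Fin m => y (p k) || y (q k)) = false) ↔
      y = fun _ => false := by
  rw [bool_sup_eq_false]
  constructor
  · intro h
    funext i
    obtain ⟨k, hk⟩ := hocc i
    have := h k (Finset.mem_univ k)
    rw [Bool.or_eq_false_iff] at this
    rcases hk with hk | hk <;> rw [← hk] <;> tauto
  · rintro rfl k _
    rfl

lemma card_ff18 {n m : ℕ} (p q : Fin m → Fin n)
    (hocc : ∀ i : Fin n, ∃ k : Fin m, p k = i ∨ q k = i) :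
    Fintype.card {y : Fin n → Bool // C18 p q false false y} = 2 ^ n - 1 := by
  have e : {y : Fin n → Bool // C18 p q false false y} ≃
      {y : Fin n → Bool // ¬ (y = fun _ => true)} := by
    apply Equiv.subtypeEquivRight
    intro y
    show (Finset.univ.inf fun k : Fin m => y (p k) && y (q k)) = false ↔ _
    rw [← inf_and_iff18 p q hocc y, bool_fnt]
  rw [Fintype.card_congr e, Fintype.card_subtype_compl, Fintype.card_subtype_eq]
  simp

lemma card_tt18 {n m : ℕ} (p q : Fin m → Fin n)
    (hocc : ∀ i : Fin n, ∃ k : Fin m, p k = i ∨ q k = i) :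
    Fintype.card {y : Fin n → Bool // C18 p q true true y} = 2 ^ n - 1 := by
  have e : {y : Fin n → Bool // C18 p q true true y} ≃
      {y : Fin n → Bool // ¬ (y = fun _ => false)} := by
    apply Equiv.subtypeEquivRight
    intro y
    show (Finset.univ.sup fun k : Fin m => y (p k) || y (q k)) = true ↔ _
    rw [← sup_or_iff18 p q hocc y, bool_tfnf]
  rw [Fintype.card_congr e, Fintype.card_subtype_compl, Fintype.card_subtype_eq]
  simp

lemma card_ft18 {n m : ℕ} (p q : Fin m → Fin n) :
    Fintype.card {y : Fin n → Bool // C18 p q false true y} =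
      Fintype.card {y : Fin n → Bool // ∀ k, (y (p k) || y (q k)) = true} := by
  apply Fintype.card_congr
  apply Equiv.subtypeEquivRight
  intro y
  show (Finset.univ.inf fun k : Fin m => y (p k) || y (q k)) = true ↔ _
  rw [bool_inf_eq_true]
  simp

lemma card_tf18 {n m : ℕ} (p q : Fin m → Fin n) :
    Fintype.card {y : Fin n → Bool // C18 p q true false y} =
      Fintype.card {y : Fin n → Bool // ∀ k, (y (p k) || y (q k)) = true} := by
  apply Fintype.card_congr
  refine ⟨fun y => ⟨fun i => !y.1 i, ?_⟩, fun y => ⟨fun i => !y.1 i, ?_⟩, ?_, ?_⟩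
  · intro k
    have h : (Finset.univ.sup fun k : Fin m => y.1 (p k) && y.1 (q k)) = false := y.2
    rw [bool_sup_eq_false] at h
    have := h k (Finset.mem_univ k)
    rw [Bool.and_eq_false_iff] at this
    rcases this with h' | h' <;> simp [h']
  · show (Finset.univ.sup fun k : Fin m => (!y.1 (p k)) && (!y.1 (q k))) = false
    rw [bool_sup_eq_false]
    intro k _
    have := y.2 k
    rw [Bool.or_eq_true] at this
    rcases this with h' | h' <;> simp [h']
  · intro y; apply Subtype.ext; funext i; simp
  · intro y; apply Subtype.ext; funext i; simp


/-- If `n ≥ 1` and every variable occurs in some clause, the number of fixed points of the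
system `sys18` equals `2 ⋅ #sat + 2 ^ (n + 1) − 2`, where `#sat` is the number of
satisfying assignments of the positive 2-CNF `⋀_k (x_{p_k} ∨ x_{q_k})`. -/
theorem stmt18 (n m : ℕ) (hn : 1 ≤ n) (p q : Fin m → Fin n)
    (hocc : ∀ i : Fin n, ∃ k : Fin m, p k = i ∨ q k = i) :
    Fintype.card {x : Unit ⊕ Fin n ⊕ Unit → Bool // ∀ v, sys18 n m p q v x = x v} =
    2 * Fintype.card {y : Fin n → Bool // ∀ k, (y (p k) || y (q k)) = true} +
      2 ^ (n + 1) - 2 := by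
  rw [Fintype.card_congr (E18 p q)]
  rw [Fintype.card_sigma]
  simp only [Fintype.sum_prod_type, Fintype.sum_bool]
  rw [card_ff18 p q hocc, card_tt18 p q hocc, card_ft18 p q, card_tf18 p q]
  have hP : 1 ≤ 2 ^ n := Nat.one_le_two_pow
  have h2 : 2 ^ (n + 1) = 2 * 2 ^ n := by ring
  generalize Fintype.card { y : Fin n → Bool // ∀ (k : Fin m), (y (p k) || y (q k)) = true } = B
  omega
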